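/- In the sequential scheduling game on m unrelated machines where players have 1-lookahead, every 1-lookahead play of all n jobs starting from zero initial loads has makespan at most 3m·OPT; in particular the sequential price of anarchy for 1-lookahead players on m machines is O(m). -/
import Mathlib


/-!
Sequential scheduling game on `m` unrelated machines with `k`-lookahead players.
Machines are indexed by `Fin m`, jobs by natural numbers (a block `[a:b]` of jobs plays
in the order `a, a+1, …, b`), and `p i j` is the processing time of job `j` on machine `i`.
-/

/-- Add the processing time of job `j` on machine `i` to the load vector `D`. -/
def bump {m : ℕ} (p : Fin m → ℕ → ℝ) (D : Fin m → ℝ) (i : Fin m) (j : ℕ) : Fin m → ℝ :=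
  fun i' => D i' + if i' = i then p i j else 0

/-- `Out p D js F`: `F` is the final load vector of some backward-induction
(subgame-perfect, ties broken arbitrarily) play of the finite extensive game in which
the jobs in `js` choose machines in order, starting from loads `D`; the payoff of each
job is the load, after all of these moves, of the machine it chose. -/
inductive Out {m : ℕ} (p : Fin m → ℕ → ℝ) : (Fin m → ℝ) → List ℕ → (Fin m → ℝ) → Prop
  | nil (D : Fin m → ℝ) : Out p D [] D
  | cons (D : Fin m → ℝ) (j : ℕ) (js : List ℕ) (i : Fin m) (cont : Fin m → Fin m → ℝ)
      (hcont : ∀ i', Out p (bump p D i' j) js (cont i'))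
      (hopt : ∀ i', cont i i ≤ cont i' i') :
      Out p D (j :: js) (cont i)

/-- `i` is an optimal root move, for the root job `j` followed by the jobs `js`,
of the lookahead game starting from loads `D`, solved by backward induction
(ties broken arbitrarily). -/
def RootMove {m : ℕ} (p : Fin m → ℕ → ℝ) (D : Fin m → ℝ) (j : ℕ) (js : List ℕ)
    (i : Fin m) : Prop :=
  ∃ cont : Fin m → Fin m → ℝ,
    (∀ i', Out p (bump p D i' j) js (cont i')) ∧ (∀ i', cont i i ≤ cont i' i')

/-- `Play p k D a b F`: starting from initial loads `D`, the block `[a:b]` of jobs plays a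
`k`-lookahead play resulting in final loads `F`: the first remaining job `a` makes an
optimal root move of the lookahead game on jobs `a, a+1, …, min (a+k) b`, its processing
time is added to the chosen machine, and the remaining jobs continue. -/
inductive Play {m : ℕ} (p : Fin m → ℕ → ℝ) (k : ℕ) :
    (Fin m → ℝ) → ℕ → ℕ → (Fin m → ℝ) → Prop
  | nil (D : Fin m → ℝ) (a b : ℕ) (h : b < a) : Play p k D a b D
  | cons (D : Fin m → ℝ) (a b : ℕ) (i : Fin m) (F : Fin m → ℝ) (hab : a ≤ b)
      (hroot : RootMove p D a (List.range' (a + 1) (min (a + k) b - a)) i)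
      (hplay : Play p k (bump p D i a) (a + 1) b F) :
      Play p k D a b F

/-- Maximum load of a load vector. -/
noncomputable def maxLoad {m : ℕ} (D : Fin m → ℝ) : ℝ := ⨆ i, D i

/-- `ΔL([a:b])`: the maximum possible increase of the makespan caused by the block
`[a:b]` of jobs, over all nonnegative initial loads and all `k`-lookahead plays. -/
noncomputable def deltaL {m : ℕ} (p : Fin m → ℕ → ℝ) (k a b : ℕ) : ℝ :=
  sSup {x | ∃ D F : Fin m → ℝ,
    (∀ i, 0 ≤ D i) ∧ Play p k D a b F ∧ x = maxLoad F - maxLoad D}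

/-- Minimum processing time of job `j`. -/
noncomputable def pmin {m : ℕ} (p : Fin m → ℕ → ℝ) (j : ℕ) : ℝ := ⨅ i, p i j

/-- Makespan of an arbitrary schedule `τ` of jobs `1, …, n` on `m` machines. -/
noncomputable def makespanM {m : ℕ} (n : ℕ) (p : Fin m → ℕ → ℝ) (τ : ℕ → Fin m) : ℝ :=
  ⨆ i, ∑ j ∈ Finset.Icc 1 n, if τ j = i then p i j else 0

/-- Optimal (minimum) makespan over all schedules of jobs `1, …, n`. -/
noncomputable def OPTm {m : ℕ} (n : ℕ) (p : Fin m → ℕ → ℝ) : ℝ :=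
  sInf {x | ∃ τ : ℕ → Fin m, x = makespanM n p τ}

section Aux
variable {m : ℕ} {p : Fin m → ℕ → ℝ}

lemma le_maxLoad (D : Fin m → ℝ) (x : Fin m) : D x ≤ maxLoad D :=
  le_ciSup (Set.Finite.bddAbove (Set.finite_range D)) x

lemma maxLoad_le [Nonempty (Fin m)] {D : Fin m → ℝ} {c : ℝ} (h : ∀ x, D x ≤ c) :
    maxLoad D ≤ c := ciSup_le h

lemma pmin_nonneg [Nonempty (Fin m)] (hp : ∀ i j, 0 ≤ p i j) (j : ℕ) : 0 ≤ pmin p j :=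
  le_ciInf (fun i => hp i j)

lemma pmin_le (j : ℕ) (x : Fin m) : pmin p j ≤ p x j :=
  ciInf_le (Set.Finite.bddBelow (Set.finite_range _)) x

lemma out_mono (hp : ∀ i j, 0 ≤ p i j) {D : Fin m → ℝ} {js : List ℕ} {F : Fin m → ℝ}
    (h : Out p D js F) : ∀ x, D x ≤ F x := by
  induction h with
  | nil D => intro x; exact le_rfl
  | cons D j js i cont hcont hopt ih =>
      intro x
      refine le_trans ?_ (ih i x)
      unfold bump
      have : (0:ℝ) ≤ if x = i then p i j else 0 := by split <;> simp [hp]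
      linarith

lemma out_nil_inv {D F : Fin m → ℝ} (h : Out p D [] F) : F = D := by cases h; rfl

lemma out_cons_inv {D F : Fin m → ℝ} {j : ℕ} {js : List ℕ} (h : Out p D (j :: js) F) :
    ∃ (i : Fin m) (cont : Fin m → Fin m → ℝ),
      (∀ i', Out p (bump p D i' j) js (cont i')) ∧ (∀ i', cont i i ≤ cont i' i') ∧
      F = cont i := by
  cases h with
  | cons D j js i cont hcont hopt => exact ⟨i, cont, hcont, hopt, rfl⟩
lemma rootmove_nil_bound [Nonempty (Fin m)] (hp : ∀ i j, 0 ≤ p i j)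
    {D : Fin m → ℝ} {a : ℕ} {i : Fin m} (h : RootMove p D a [] i) :
    D i + p i a ≤ maxLoad D + pmin p a := by
  obtain ⟨cont, hcont, hopt⟩ := h
  obtain ⟨i₁, hi₁⟩ := Finite.exists_min (fun x => p x a)
  have hc : ∀ i', cont i' = bump p D i' a := fun i' => out_nil_inv (hcont i')
  have h1 : D i + p i a = cont i i := by simp [hc, bump]
  have h2 : cont i₁ i₁ = D i₁ + p i₁ a := by simp [hc, bump]
  have h3 : p i₁ a ≤ pmin p a := le_ciInf hi₁
  have := hopt i₁
  have := le_maxLoad D i₁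
  linarith

lemma rootmove_single_bound [Nonempty (Fin m)] (hp : ∀ i j, 0 ≤ p i j)
    {D : Fin m → ℝ} {a j₂ : ℕ} {i : Fin m} (h : RootMove p D a [j₂] i) :
    D i + p i a ≤ maxLoad D + pmin p a + pmin p j₂ := by
  obtain ⟨cont, hcont, hopt⟩ := h
  obtain ⟨i₁, hi₁⟩ := Finite.exists_min (fun x => p x a)
  have hp1 : p i₁ a ≤ pmin p a := le_ciInf hi₁
  have h1 : D i + p i a ≤ cont i i := by
    have := out_mono hp (hcont i) i
    simpa [bump] using this
  obtain ⟨i₂, cont2, hc2, ho2, heq⟩ := out_cons_inv (hcont i₁)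
  have hc2' : ∀ x, cont2 x = bump p (bump p D i₁ a) x j₂ := fun x => out_nil_inv (hc2 x)
  have key : cont i₁ i₁ ≤ maxLoad D + pmin p a + pmin p j₂ := by
    rw [heq]
    by_cases h12 : i₁ = i₂
    · subst h12
      obtain ⟨i₃, hi₃⟩ := Finite.exists_min (fun x => p x j₂)
      have hp3 : p i₃ j₂ ≤ pmin p j₂ := le_ciInf hi₃
      have h6 := ho2 i₃
      have h4 : cont2 i₃ i₃ = D i₃ + (if i₃ = i₁ then p i₁ a else 0) + p i₃ j₂ := by
        simp [hc2', bump]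
      have hnn : (0:ℝ) ≤ pmin p a := pmin_nonneg hp a
      have h7 : (if i₃ = i₁ then p i₁ a else 0) ≤ pmin p a := by
        split <;> linarith
      have := le_maxLoad D i₃
      linarith
    · have h8 : cont2 i₂ i₁ = D i₁ + p i₁ a := by
        simp [hc2', bump, h12, Ne.symm h12]
      rw [h8]
      have := le_maxLoad D i₁
      have hnn : (0:ℝ) ≤ pmin p j₂ := pmin_nonneg hp j₂
      linarith
  exact le_trans h1 (le_trans (hopt i₁) key)
lemma maxLoad_bump_le [Nonempty (Fin m)] {D : Fin m → ℝ} {i : Fin m} {a : ℕ} {c : ℝ}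
    (hD : ∀ x, D x ≤ c) (hi : D i + p i a ≤ c) : maxLoad (bump p D i a) ≤ c := by
  apply maxLoad_le
  intro x
  by_cases hx : x = i
  · subst hx; simpa [bump] using hi
  · simpa [bump, hx] using hD x

lemma play_bound (hm : 0 < m) (hp : ∀ i j, 0 ≤ p i j) {D : Fin m → ℝ} {a b : ℕ}
    {F : Fin m → ℝ} (h : Play p 1 D a b F) :
    maxLoad F ≤ maxLoad D + (∑ j ∈ Finset.Icc a b, pmin p j)
      + ∑ j ∈ Finset.Icc (a+1) b, pmin p j := by
  haveI : Nonempty (Fin m) := Fin.pos_iff_nonempty.mp hm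
  induction h with
  | nil D a b h =>
      rw [Finset.Icc_eq_empty (by omega), Finset.Icc_eq_empty (by omega)]
      simp
  | cons D a b i F hab hroot hplay ih =>
      have hsplit : ∀ a' b' : ℕ, a' ≤ b' → ∑ j ∈ Finset.Icc a' b', pmin p j
          = pmin p a' + ∑ j ∈ Finset.Icc (a'+1) b', pmin p j := by
        intro a' b' hle
        have hins : Finset.Icc a' b' = insert a' (Finset.Icc (a'+1) b') := by
          ext x; simp [Finset.mem_Icc]; omega
        rw [hins, Finset.sum_insert (by simp [Finset.mem_Icc])]
      rcases eq_or_lt_of_le hab with heq | hlt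
      · subst heq
        rw [show min (a + 1) a - a = 0 from by omega, List.range'] at hroot
        have hb := rootmove_nil_bound hp hroot
        have hnn : (0:ℝ) ≤ pmin p a := pmin_nonneg hp a
        have hbump : maxLoad (bump p D i a) ≤ maxLoad D + pmin p a :=
          maxLoad_bump_le (fun x => by linarith [le_maxLoad D x]) hb
        rw [Finset.Icc_eq_empty (by omega), Finset.Icc_eq_empty (by omega)] at ih
        simp only [Finset.sum_empty, add_zero] at ih
        rw [Finset.Icc_self, Finset.sum_singleton, Finset.Icc_eq_empty (by omega)]
        simp only [Finset.sum_empty, add_zero]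
        linarith
      · rw [show min (a + 1) b - a = 1 from by omega] at hroot
        have hlist : List.range' (a + 1) 1 = [a + 1] := by simp [List.range']
        rw [hlist] at hroot
        have hb := rootmove_single_bound hp hroot
        have hnn : (0:ℝ) ≤ pmin p a := pmin_nonneg hp a
        have hnn2 : (0:ℝ) ≤ pmin p (a+1) := pmin_nonneg hp (a+1)
        have hbump : maxLoad (bump p D i a) ≤ maxLoad D + pmin p a + pmin p (a+1) :=
          maxLoad_bump_le (fun x => by linarith [le_maxLoad D x]) hb
        rw [hsplit a b hab, hsplit (a+1) b hlt]
        rw [hsplit (a+1) b hlt] at ih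
        linarith

end Aux

/-- On `m` unrelated machines with 1-lookahead players, every
1-lookahead play of all `n` jobs from zero initial loads has makespan at most
`3m · OPT`; in particular the sequential price of anarchy is `O(m)`. -/
theorem spoa_oneLookahead_m_machines (m n : ℕ) (hm : 0 < m)
    (p : Fin m → ℕ → ℝ) (hp : ∀ i j, 0 ≤ p i j)
    (F : Fin m → ℝ) (hF : Play p 1 (fun _ => 0) 1 n F) :
    maxLoad F ≤ 3 * (m : ℝ) * OPTm n p := by
  haveI : Nonempty (Fin m) := Fin.pos_iff_nonempty.mp hm
  have hm' : (0:ℝ) < m := by exact_mod_cast hm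
  have hzero : maxLoad (fun _ : Fin m => (0:ℝ)) = 0 := ciSup_const
  have hmain := play_bound hm hp hF
  rw [hzero] at hmain
  set S1 := ∑ j ∈ Finset.Icc 1 n, pmin p j with hS1
  have hsub : ∑ j ∈ Finset.Icc (1+1) n, pmin p j ≤ S1 := by
    apply Finset.sum_le_sum_of_subset_of_nonneg
    · exact Finset.Icc_subset_Icc (by norm_num) le_rfl
    · intro j _ _; exact pmin_nonneg hp j
  have hne : {x | ∃ τ : ℕ → Fin m, x = makespanM n p τ}.Nonempty :=
    ⟨makespanM n p (fun _ => Classical.arbitrary _), ⟨_, rfl⟩⟩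
  have hms_nonneg : ∀ τ : ℕ → Fin m, 0 ≤ makespanM n p τ := by
    intro τ
    obtain ⟨i0⟩ := ‹Nonempty (Fin m)›
    refine le_trans ?_ (le_ciSup (Set.Finite.bddAbove (Set.finite_range _)) i0)
    apply Finset.sum_nonneg
    intro j _; split <;> simp [hp]
  have hms_ge : ∀ τ : ℕ → Fin m, S1 ≤ m * makespanM n p τ := by
    intro τ
    have h1 : S1 ≤ ∑ j ∈ Finset.Icc 1 n, p (τ j) j :=
      Finset.sum_le_sum (fun j _ => pmin_le j (τ j))
    have h2 : ∑ j ∈ Finset.Icc 1 n, p (τ j) j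
        = ∑ i : Fin m, ∑ j ∈ Finset.Icc 1 n, (if τ j = i then p i j else 0) := by
      rw [Finset.sum_comm]
      apply Finset.sum_congr rfl
      intro j _
      simp
    have h3 : ∀ i : Fin m, (∑ j ∈ Finset.Icc 1 n, if τ j = i then p i j else 0)
        ≤ makespanM n p τ := by
      intro i
      unfold makespanM
      exact le_ciSup (f := fun i => ∑ j ∈ Finset.Icc 1 n, if τ j = i then p i j else 0)
        (Set.Finite.bddAbove (Set.finite_range _)) i
    calc S1 ≤ ∑ i : Fin m, ∑ j ∈ Finset.Icc 1 n, (if τ j = i then p i j else 0) := by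
              rw [← h2]; exact h1
      _ ≤ ∑ _i : Fin m, makespanM n p τ := Finset.sum_le_sum (fun i _ => h3 i)
      _ = m * makespanM n p τ := by simp [Finset.sum_const, mul_comm]
  have hOPT0 : 0 ≤ OPTm n p :=
    le_csInf hne (by rintro x ⟨τ, rfl⟩; exact hms_nonneg τ)
  have hS1opt : S1 ≤ (m:ℝ) * OPTm n p := by
    have hdiv : S1 / m ≤ OPTm n p := by
      apply le_csInf hne
      rintro x ⟨τ, rfl⟩
      rw [div_le_iff₀ hm']
      calc S1 ≤ m * makespanM n p τ := hms_ge τ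
        _ = makespanM n p τ * m := mul_comm _ _
    calc S1 = S1 / m * m := by field_simp
      _ ≤ OPTm n p * m := by
          apply mul_le_mul_of_nonneg_right hdiv (le_of_lt hm')
      _ = (m:ℝ) * OPTm n p := mul_comm _ _
  have hmopt : (0:ℝ) ≤ (m:ℝ) * OPTm n p := mul_nonneg (le_of_lt hm') hOPT0
  linarith
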